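/- arXiv:2104.12824 — 5 statements merged into one kernel-verified Lean document; each statement's English description precedes it below -/
import Mathlib

section
/- There exists a constant C > 0, depending only on ω, ρ, M and ‖g‖_{L^∞(0,∞)}, such that for every integer k ≥ 1 the following holds: if Φ ∈ H²(0,∞) satisfies Φ'' = −k²ω² g Φ almost everywhere on (0,∞) and |Φ(x)| ≤ M e^{−ρx} for all x ≥ 0, then ‖Φ‖_{L²(0,∞)} ≤ C, ‖Φ'‖_{L²(0,∞)} ≤ C·k, and ‖Φ'‖_{L^∞(0,∞)} ≤ C·k^{3/2}; in particular |Φ'(0)| ≤ C·k^{3/2}. -/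
open MeasureTheory

open Set


private lemma key_bound (ω ρ M G : ℝ) (hρ : 0 < ρ) (hM : 0 < M) (hG : 0 ≤ G)
    (g : ℝ → ℝ) (hg : ∀ᵐ x ∂(volume.restrict (Set.Ioi (0 : ℝ))), |g x| ≤ G)
    (k : ℕ) (hk : 1 ≤ k) (Φ Φ' : ℝ → ℝ)
    (hd : ∀ x ∈ Set.Ici (0 : ℝ), HasDerivWithinAt Φ (Φ' x) (Set.Ici 0) x)
    (hΦ'' : ∀ x₁ ∈ Set.Ici (0 : ℝ), ∀ x₂ ∈ Set.Ici (0 : ℝ),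
      Φ' x₂ - Φ' x₁ = ∫ x in x₁..x₂, -((k : ℝ) ^ 2 * ω ^ 2 * g x * Φ x))
    (hdec : ∀ x : ℝ, 0 ≤ x → |Φ x| ≤ M * Real.exp (-ρ * x)) :
    ∀ x : ℝ, 0 ≤ x → |Φ' x| ≤ (M * (2 + ω ^ 2 * G)) * k * Real.exp (-ρ * x) := by
  intro x hx
  have hk0 : (0:ℝ) < k := by exact_mod_cast Nat.lt_of_lt_of_le Nat.zero_lt_one hk
  set h : ℝ := (k : ℝ)⁻¹ with hh
  have hh0 : 0 < h := inv_pos.mpr hk0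
  have hlt : x < x + h := by linarith
  -- continuity of Φ on [x, x+h]
  have hcont : ContinuousOn Φ (Icc x (x + h)) := by
    have : ContinuousOn Φ (Ici 0) := fun t ht => (hd t ht).continuousWithinAt
    exact this.mono (fun t ht => le_trans hx ht.1)
  -- derivative on Ioo
  have hderivAt : ∀ t ∈ Ioo x (x + h), HasDerivAt Φ (Φ' t) t := by
    intro t ht
    have ht0 : 0 < t := lt_of_le_of_lt hx ht.1
    exact (hd t (le_of_lt ht0)).hasDerivAt (Ici_mem_nhds ht0)
  obtain ⟨c, hc, hslope⟩ := exists_hasDerivAt_eq_slope Φ Φ' hlt hcont hderivAt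
  have hc0 : 0 ≤ c := le_trans hx (le_of_lt hc.1)
  have hexp : Real.exp (-ρ * (x + h)) ≤ Real.exp (-ρ * x) := by
    apply Real.exp_le_exp.mpr; nlinarith
  -- bound on Φ' c
  have hΦ'c : |Φ' c| ≤ 2 * M * k * Real.exp (-ρ * x) := by
    rw [hslope, add_sub_cancel_left]
    rw [abs_div, abs_of_pos hh0]
    rw [div_le_iff₀ hh0]
    have h1 := hdec (x + h) (by linarith)
    have h2 := hdec x hx
    calc |Φ (x + h) - Φ x| ≤ |Φ (x + h)| + |Φ x| := abs_sub _ _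
      _ ≤ 2 * M * Real.exp (-ρ * x) := by nlinarith [Real.exp_pos (-ρ*x)]
      _ = 2 * M * k * Real.exp (-ρ * x) * h := by
          have hkh : (k:ℝ) * h = 1 := by rw [hh]; exact mul_inv_cancel₀ hk0.ne'
          linear_combination (-(2 * M * Real.exp (-ρ * x))) * hkh
  -- bound on the integral term
  have hint : |Φ' c - Φ' x| ≤ (k : ℝ) * ω ^ 2 * G * M * Real.exp (-ρ * x) := by
    rw [hΦ'' x hx c hc0]
    have hgG : ∀ᵐ t, t ∈ Set.Ioi (0:ℝ) → |g t| ≤ G := (ae_restrict_iff' measurableSet_Ioi).mp hg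
    have hbd : ∀ᵐ t, t ∈ Set.uIoc x c →
        ‖-((k : ℝ) ^ 2 * ω ^ 2 * g t * Φ t)‖ ≤ (k:ℝ)^2 * ω ^ 2 * G * M * Real.exp (-ρ * x) := by
      filter_upwards [hgG] with t hgt ht
      rw [Set.uIoc_of_le (le_of_lt hc.1)] at ht
      have ht0 : 0 < t := lt_of_le_of_lt hx ht.1
      have hgt' := hgt ht0
      have hΦt := hdec t (le_of_lt ht0)
      have hexpt : Real.exp (-ρ * t) ≤ Real.exp (-ρ * x) := by
        apply Real.exp_le_exp.mpr; nlinarith [ht.1]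
      rw [norm_neg, Real.norm_eq_abs]
      have : |(k : ℝ) ^ 2 * ω ^ 2 * g t * Φ t| = (k:ℝ)^2 * ω^2 * (|g t| * |Φ t|) := by
        rw [abs_mul, abs_mul]
        rw [abs_of_nonneg (by positivity : (0:ℝ) ≤ (k:ℝ)^2 * ω^2)]
        ring
      rw [this]
      have h1 : |g t| * |Φ t| ≤ G * (M * Real.exp (-ρ * x)) := by
        have := hΦt.trans (by nlinarith : M * Real.exp (-ρ * t) ≤ M * Real.exp (-ρ * x))
        exact mul_le_mul hgt' this (abs_nonneg _) hG
      nlinarith [sq_nonneg ((k:ℝ) * ω)]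
    have := intervalIntegral.norm_integral_le_of_norm_le_const_ae hbd
    rw [Real.norm_eq_abs] at this
    refine this.trans ?_
    have hcx : |c - x| ≤ h := by
      rw [abs_of_pos (by linarith [hc.1] : (0:ℝ) < c - x)]
      linarith [hc.2]
    calc (k:ℝ)^2 * ω ^ 2 * G * M * Real.exp (-ρ * x) * |c - x|
        ≤ (k:ℝ)^2 * ω ^ 2 * G * M * Real.exp (-ρ * x) * h := by
          apply mul_le_mul_of_nonneg_left hcx; positivity
      _ = (k : ℝ) * ω ^ 2 * G * M * Real.exp (-ρ * x) := by
          have hkh : (k:ℝ) * h = 1 := by rw [hh]; exact mul_inv_cancel₀ hk0.ne'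
          linear_combination (k:ℝ) * ω ^ 2 * G * M * Real.exp (-ρ * x) * hkh
  calc |Φ' x| ≤ |Φ' c| + |Φ' c - Φ' x| := by
        have := abs_sub_abs_le_abs_sub (Φ' x) (Φ' c)
        have := abs_sub_comm (Φ' x) (Φ' c)
        have h3 := abs_sub (Φ' x) (Φ' c)
        nlinarith [abs_nonneg (Φ' c - Φ' x), abs_sub_abs_le_abs_sub (Φ' x) (Φ' c), abs_sub_comm (Φ' x) (Φ' c)]
    _ ≤ 2 * M * k * Real.exp (-ρ * x) + (k : ℝ) * ω ^ 2 * G * M * Real.exp (-ρ * x) := by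
        exact add_le_add hΦ'c hint
    _ = (M * (2 + ω ^ 2 * G)) * k * Real.exp (-ρ * x) := by ring

private lemma intexp_aux (b : ℝ) (hb : 0 < b) : ∫ x in Set.Ioi (0:ℝ), Real.exp (-b*x) = b⁻¹ := by
  have h := MeasureTheory.integral_comp_mul_left_Ioi (fun x => Real.exp (-x)) 0 hb
  simp only [mul_zero, integral_exp_neg_Ioi, neg_zero, Real.exp_zero, smul_eq_mul, mul_one] at h
  rw [← h]
  congr 1 with x
  ring_nf

private lemma sq_decay_integral (ρ B : ℝ) (hρ : 0 < ρ) (hB : 0 ≤ B) (F : ℝ → ℝ)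
    (hF : MeasureTheory.MemLp F 2 (volume.restrict (Set.Ioi (0 : ℝ))))
    (hdec : ∀ x : ℝ, 0 ≤ x → |F x| ≤ B * Real.exp (-ρ * x)) :
    (∫ x in Set.Ioi (0 : ℝ), (F x) ^ 2) ≤ B ^ 2 * (2 * ρ)⁻¹ := by
  have h2ρ : 0 < 2 * ρ := by linarith
  have hint1 : MeasureTheory.IntegrableOn (fun x => F x ^ 2) (Set.Ioi (0:ℝ)) := hF.integrable_sq
  have hint2 : MeasureTheory.IntegrableOn (fun x => B ^ 2 * Real.exp (-(2*ρ) * x))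
      (Set.Ioi (0:ℝ)) := (exp_neg_integrableOn_Ioi 0 h2ρ).const_mul _
  have hmono := MeasureTheory.setIntegral_mono_on hint1 hint2 measurableSet_Ioi ?_
  · refine hmono.trans ?_
    rw [MeasureTheory.integral_const_mul, intexp_aux _ h2ρ]
  · intro x hx
    have hx0 : (0:ℝ) ≤ x := le_of_lt hx
    have h1 := hdec x hx0
    have h2 : Real.exp (-ρ * x) * Real.exp (-ρ * x) = Real.exp (-(2*ρ) * x) := by
      rw [← Real.exp_add]; ring_nf
    calc F x ^ 2 = |F x| ^ 2 := (sq_abs _).symm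
      _ ≤ (B * Real.exp (-ρ * x)) ^ 2 := pow_le_pow_left₀ (abs_nonneg _) h1 2
      _ = B ^ 2 * Real.exp (-(2*ρ) * x) := by rw [mul_pow, ← h2]; ring

/-- Norm estimates for the decaying fundamental solutions: there is a constant `C > 0`
depending only on `ω, ρ, M` and the `L^∞(0,∞)`-bound `G` of `g`, such that for every
`k ≥ 1` and every `Φ ∈ H²(0,∞)` (with `C¹` representative `Φ` and derivative `Φ'`)
solving `Φ'' = -k²ω² g Φ` a.e. on `(0,∞)` and satisfying `|Φ(x)| ≤ M e^{-ρx}`: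
`‖Φ‖_{L²(0,∞)} ≤ C`, `‖Φ'‖_{L²(0,∞)} ≤ C k`, `‖Φ'‖_{L^∞(0,∞)} ≤ C k^{3/2}`,
and in particular `|Φ'(0)| ≤ C k^{3/2}`. -/
theorem stmt2 (ω ρ M G : ℝ) (hω : 0 < ω) (hρ : 0 < ρ) (hM : 0 < M) (hG : 0 ≤ G) :
    ∃ C : ℝ, 0 < C ∧
      ∀ g : ℝ → ℝ,
        (∀ᵐ x ∂(volume.restrict (Set.Ioi (0 : ℝ))), |g x| ≤ G) →
        ∀ k : ℕ, 1 ≤ k →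
          ∀ Φ Φ' : ℝ → ℝ,
            -- Φ is C¹ on [0,∞) with derivative Φ'
            (∀ x ∈ Set.Ici (0 : ℝ), HasDerivWithinAt Φ (Φ' x) (Set.Ici 0) x) →
            (ContinuousOn Φ' (Set.Ici 0)) →
            -- Φ' is absolutely continuous with (weak) derivative Φ'' = -k²ω² g Φ
            (∀ x₁ ∈ Set.Ici (0 : ℝ), ∀ x₂ ∈ Set.Ici (0 : ℝ),
              Φ' x₂ - Φ' x₁ = ∫ x in x₁..x₂, -((k : ℝ) ^ 2 * ω ^ 2 * g x * Φ x)) →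
            -- Φ, Φ' ∈ L²(0,∞)  (membership in H²(0,∞))
            MemLp Φ 2 (volume.restrict (Set.Ioi (0 : ℝ))) →
            MemLp Φ' 2 (volume.restrict (Set.Ioi (0 : ℝ))) →
            -- exponential decay
            (∀ x : ℝ, 0 ≤ x → |Φ x| ≤ M * Real.exp (-ρ * x)) →
            ((∫ x in Set.Ioi (0 : ℝ), (Φ x) ^ 2) ≤ C ^ 2 ∧
              (∫ x in Set.Ioi (0 : ℝ), (Φ' x) ^ 2) ≤ C ^ 2 * (k : ℝ) ^ 2 ∧
              (∀ x : ℝ, 0 ≤ x → |Φ' x| ≤ C * (k : ℝ) ^ ((3 : ℝ) / 2)) ∧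
              |Φ' 0| ≤ C * (k : ℝ) ^ ((3 : ℝ) / 2)) := by
  set A : ℝ := M * (2 + ω ^ 2 * G) with hA_def
  have hA : 0 < A := by positivity
  set s : ℝ := Real.sqrt (2 * ρ) with hs_def
  have hs : 0 < s := Real.sqrt_pos.mpr (by linarith)
  have hs2 : s ^ 2 = 2 * ρ := Real.sq_sqrt (by linarith)
  refine ⟨(A + M) * (1 + s⁻¹), by positivity, ?_⟩
  set C : ℝ := (A + M) * (1 + s⁻¹) with hC_def
  have hC : 0 < C := by positivity
  have hsi : 0 < s⁻¹ := inv_pos.mpr hs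
  have hMC : M * s⁻¹ ≤ C := by rw [hC_def]; nlinarith
  have hAC : A * s⁻¹ ≤ C := by rw [hC_def]; nlinarith
  have hAC' : A ≤ C := by rw [hC_def]; nlinarith
  intro g hg k hk Φ Φ' hd hcont' hΦ'' hΦ2 hΦ'2 hdec
  have hk1 : (1:ℝ) ≤ (k:ℝ) := by exact_mod_cast hk
  have hkey := key_bound ω ρ M G hρ hM hG g hg k hk Φ Φ' hd hΦ'' hdec
  have hAk : 0 ≤ A * (k:ℝ) := by positivity
  have hkey' : ∀ x : ℝ, 0 ≤ x → |Φ' x| ≤ (A * (k:ℝ)) * Real.exp (-ρ * x) := by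
    intro x hx; rw [hA_def]; exact hkey x hx
  refine ⟨?_, ?_, ?_, ?_⟩
  · -- L² bound on Φ
    have := sq_decay_integral ρ M hρ (le_of_lt hM) Φ hΦ2 hdec
    refine this.trans ?_
    have h1 : M ^ 2 * (2*ρ)⁻¹ = (M * s⁻¹) ^ 2 := by
      rw [mul_pow, ← hs2]; ring
    rw [h1]
    exact pow_le_pow_left₀ (by positivity) hMC 2
  · -- L² bound on Φ'
    have := sq_decay_integral ρ (A * (k:ℝ)) hρ hAk Φ' hΦ'2 hkey'
    refine this.trans ?_
    have h1 : (A * (k:ℝ)) ^ 2 * (2*ρ)⁻¹ = (A * s⁻¹ * (k:ℝ)) ^ 2 := by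
      rw [mul_pow, mul_pow, ← hs2]; ring
    rw [h1]
    have h2 : A * s⁻¹ * (k:ℝ) ≤ C * (k:ℝ) := by
      exact mul_le_mul_of_nonneg_right hAC (by linarith)
    calc (A * s⁻¹ * (k:ℝ)) ^ 2 ≤ (C * (k:ℝ)) ^ 2 := pow_le_pow_left₀ (by positivity) h2 2
      _ = C ^ 2 * (k:ℝ) ^ 2 := by ring
  · -- sup bound
    intro x hx
    have h1 := hkey' x hx
    have h2 : Real.exp (-ρ * x) ≤ 1 := Real.exp_le_one_iff.mpr (by nlinarith)
    have h3 : (k:ℝ) ≤ (k:ℝ) ^ ((3:ℝ)/2) := by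
      calc (k:ℝ) = (k:ℝ) ^ (1:ℝ) := (Real.rpow_one _).symm
        _ ≤ (k:ℝ) ^ ((3:ℝ)/2) := Real.rpow_le_rpow_of_exponent_le hk1 (by norm_num)
    have hrk : 0 ≤ (k:ℝ) ^ ((3:ℝ)/2) := Real.rpow_nonneg (by positivity) _
    calc |Φ' x| ≤ (A * (k:ℝ)) * Real.exp (-ρ * x) := h1
      _ ≤ A * (k:ℝ) := by nlinarith
      _ ≤ A * (k:ℝ) ^ ((3:ℝ)/2) := mul_le_mul_of_nonneg_left h3 (le_of_lt hA)
      _ ≤ C * (k:ℝ) ^ ((3:ℝ)/2) := mul_le_mul_of_nonneg_right hAC' hrk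
  · have h1 := hkey' 0 le_rfl
    have h3 : (k:ℝ) ≤ (k:ℝ) ^ ((3:ℝ)/2) := by
      calc (k:ℝ) = (k:ℝ) ^ (1:ℝ) := (Real.rpow_one _).symm
        _ ≤ (k:ℝ) ^ ((3:ℝ)/2) := Real.rpow_le_rpow_of_exponent_le hk1 (by norm_num)
    have hrk : 0 ≤ (k:ℝ) ^ ((3:ℝ)/2) := Real.rpow_nonneg (by positivity) _
    simp only [mul_zero, Real.exp_zero, mul_one] at h1
    calc |Φ' 0| ≤ A * (k:ℝ) := h1
      _ ≤ A * (k:ℝ) ^ ((3:ℝ)/2) := mul_le_mul_of_nonneg_left h3 (le_of_lt hA)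
      _ ≤ C * (k:ℝ) ^ ((3:ℝ)/2) := mul_le_mul_of_nonneg_right hAC' hrk
end

section
/- If a_{k₀} < 0 for some k₀ ∈ ℤodd, then inf_{z∈D} J(z) < 0; consequently every minimizer of J on D is a nontrivial (nonzero) sequence. -/
/-- Convolution of two real sequences indexed by `ℤ`:
`(x * y)_k = ∑_{l ∈ ℤ} x_l y_{k-l}` (interpreted via `tsum`). -/
noncomputable def conv (x y : ℤ → ℝ) : ℤ → ℝ := fun k => ∑' l : ℤ, x l * y (k - l)

/-- The space `D` of real sequences: vanishing at even indices, odd in `k`, and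
`z * z ∈ ℓ²(ℤ)`. -/
def MemD (z : ℤ → ℝ) : Prop :=
  (∀ k : ℤ, Even k → z k = 0) ∧ (∀ k : ℤ, z (-k) = - z k) ∧
  Summable (fun k : ℤ => (conv z z k) ^ 2)

/-- The norm on `D`: `‖z‖ = ‖z*z‖_{ℓ²}^{1/2} = (∑_k ((z*z)_k)²)^{1/4}`. -/
noncomputable def Dnorm (z : ℤ → ℝ) : ℝ := (∑' k : ℤ, (conv z z k) ^ 2) ^ ((1 : ℝ) / 4)

/-- The functional `J(z) = ¼ (z*z*z*z)_0 + ∑_{k ∈ ℤodd} a_k z_k²`; since `z_k = 0` for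
even `k`, the sum over all of `ℤ` agrees with the sum over the odd integers. -/
noncomputable def Jfun (a : ℤ → ℝ) (z : ℤ → ℝ) : ℝ :=
  (1 / 4) * conv (conv z z) (conv z z) 0 + ∑' k : ℤ, a k * (z k) ^ 2

/-- The triple convolution `(z*z*z)_k = ∑_{l} (z*z)_l z_{k-l}`. -/
noncomputable def conv3 (z : ℤ → ℝ) : ℤ → ℝ := fun k => ∑' l : ℤ, conv z z l * z (k - l)

lemma conv_zero : conv 0 0 = 0 := by
  funext k; simp [conv]

lemma Jfun_zero (a : ℤ → ℝ) : Jfun a 0 = 0 := by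
  simp [Jfun, conv_zero, conv]

lemma MemD_zero : MemD 0 := by
  refine ⟨fun k _ => rfl, fun k => by simp, ?_⟩
  simp [conv_zero]

lemma conv_pair (k₀ : ℤ) (t : ℝ) (hk : k₀ ≠ 0) :
    conv (fun k => if k = k₀ then t else if k = -k₀ then -t else 0)
         (fun k => if k = k₀ then t else if k = -k₀ then -t else 0)
    = (fun k => if k = 2*k₀ then t^2 else if k = 0 then -2*t^2 else if k = -(2*k₀) then t^2 else 0) := by
  set z : ℤ → ℝ := fun k => if k = k₀ then t else if k = -k₀ then -t else 0 with hz
  have zk0 : z k₀ = t := by simp [hz]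
  have zmk0 : z (-k₀) = -t := by
    have h : (-k₀ : ℤ) ≠ k₀ := by omega
    simp [hz, h]
  have zval : ∀ m : ℤ, m ≠ k₀ → m ≠ -k₀ → z m = 0 := by
    intro m h1 h2; simp [hz, h1, h2]
  funext k
  have h1 : conv z z k = ∑ l ∈ ({k₀, -k₀} : Finset ℤ), z l * z (k - l) := by
    apply tsum_eq_sum
    intro b hb
    simp only [Finset.mem_insert, Finset.mem_singleton, not_or] at hb
    rw [zval b hb.1 hb.2, zero_mul]
  rw [h1, Finset.sum_pair (by omega), zk0, zmk0]
  rcases eq_or_ne k (2*k₀) with h | h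
  · subst h
    rw [show 2*k₀ - k₀ = k₀ by ring, zk0,
        zval (2*k₀ - -k₀) (by omega) (by omega)]
    rw [if_pos rfl]; ring
  · rcases eq_or_ne k 0 with h2 | h2
    · subst h2
      rw [zero_sub, zmk0, zero_sub, neg_neg, zk0, if_neg h, if_pos rfl]; ring
    · rcases eq_or_ne k (-(2*k₀)) with h3 | h3
      · subst h3
        rw [zval (-(2*k₀) - k₀) (by omega) (by omega),
            show -(2*k₀) - -k₀ = -k₀ by ring, zmk0,
            if_neg h, if_neg h2, if_pos rfl]; ring
      · rw [zval (k - k₀) (by omega) (by omega),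
            zval (k - -k₀) (by omega) (by omega),
            if_neg h, if_neg h2, if_neg h3]; ring

/-- If `a_{k₀} < 0` for some odd `k₀`, then `inf_{z ∈ D} J(z) < 0`; consequently every
minimizer of `J` on `D` is nontrivial. -/
theorem stmt4 (a : ℤ → ℝ) (hsym : ∀ k : ℤ, a (-k) = a k)
    (hbd : ∃ B : ℝ, ∀ k : ℤ, Odd k → |a k| ≤ B)
    (k₀ : ℤ) (hk₀ : Odd k₀) (hneg : a k₀ < 0) :
    (∃ z : ℤ → ℝ, MemD z ∧ Jfun a z < 0) ∧
    (∀ α : ℤ → ℝ, MemD α → (∀ z : ℤ → ℝ, MemD z → Jfun a α ≤ Jfun a z) → α ≠ 0) := by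
  have hk : k₀ ≠ 0 := by rintro rfl; exact (Int.not_odd_iff_even.mpr Even.zero) hk₀
  set t : ℝ := Real.sqrt (-(a k₀) / 3) with ht
  have ht2 : t ^ 2 = -(a k₀) / 3 := Real.sq_sqrt (by linarith)
  set z : ℤ → ℝ := fun k => if k = k₀ then t else if k = -k₀ then -t else 0 with hz
  have hconv : conv z z
      = (fun k => if k = 2*k₀ then t^2 else if k = 0 then -2*t^2 else if k = -(2*k₀) then t^2 else 0) :=
    conv_pair k₀ t hk
  have zk0 : z k₀ = t := by simp [hz]
  have zmk0 : z (-k₀) = -t := by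
    have h : (-k₀ : ℤ) ≠ k₀ := by omega
    simp [hz, h]
  have zval0 : ∀ m : ℤ, m ≠ k₀ → m ≠ -k₀ → z m = 0 := by
    intro m h1 h2; simp [hz, h1, h2]
  set W : ℤ → ℝ := fun k => if k = 2*k₀ then t^2 else if k = 0 then -2*t^2 else if k = -(2*k₀) then t^2 else 0 with hW
  have hWval : ∀ m : ℤ, m ≠ 2*k₀ → m ≠ 0 → m ≠ -(2*k₀) → W m = 0 := by
    intro m h1 h2 h3; simp [hW, h1, h2, h3]
  have hW1 : W (2*k₀) = t^2 := by simp [hW]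
  have hW2 : W 0 = -2*t^2 := by
    have h : (0 : ℤ) ≠ 2*k₀ := by omega
    simp [hW, h]
  have hW3 : W (-(2*k₀)) = t^2 := by
    have h1 : -(2*k₀) ≠ 2*k₀ := by omega
    have h2 : -(2*k₀) ≠ 0 := by omega
    simp [hW, h1, h2]
  -- membership in D
  have hmemD : MemD z := by
    refine ⟨?_, ?_, ?_⟩
    · intro k hkeven
      have h1 : k ≠ k₀ := by rintro rfl; exact (Int.not_odd_iff_even.mpr hkeven) hk₀
      have h2 : k ≠ -k₀ := by
        rintro rfl
        exact (Int.not_odd_iff_even.mpr hkeven) (by simpa using hk₀.neg)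
      simp [hz, h1, h2]
    · intro k
      rcases eq_or_ne k k₀ with h | h
      · rw [h, zmk0, zk0]
      · rcases eq_or_ne k (-k₀) with h2 | h2
        · rw [h2, show -(-k₀) = k₀ by ring, zk0, zmk0, neg_neg]
        · rw [zval0 k h h2, zval0 (-k) (by omega) (by omega), neg_zero]
    · rw [hconv]
      apply summable_of_ne_finset_zero (s := ({2*k₀, 0, -(2*k₀)} : Finset ℤ))
      intro b hb
      simp only [Finset.mem_insert, Finset.mem_singleton, not_or] at hb
      rw [hWval b hb.1 hb.2.1 hb.2.2]
      norm_num
  -- quartic term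
  have hquartic : conv (conv z z) (conv z z) 0 = 6 * t^4 := by
    rw [hconv]
    show (∑' l : ℤ, W l * W (0 - l)) = 6 * t^4
    have hs : (∑' l : ℤ, W l * W (0 - l))
        = ∑ l ∈ ({2*k₀, 0, -(2*k₀)} : Finset ℤ), W l * W (0 - l) := by
      apply tsum_eq_sum
      intro b hb
      simp only [Finset.mem_insert, Finset.mem_singleton, not_or] at hb
      rw [hWval b hb.1 hb.2.1 hb.2.2, zero_mul]
    rw [hs]
    rw [Finset.sum_insert (by simp; omega), Finset.sum_insert (by simp; omega),
        Finset.sum_singleton]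
    rw [show (0 : ℤ) - 2*k₀ = -(2*k₀) by ring, show (0:ℤ) - 0 = 0 by ring,
        show (0 : ℤ) - -(2*k₀) = 2*k₀ by ring, hW1, hW2, hW3]
    ring
  -- quadratic term
  have hquad : (∑' k : ℤ, a k * (z k) ^ 2) = 2 * a k₀ * t^2 := by
    have hs : (∑' k : ℤ, a k * (z k) ^ 2)
        = ∑ k ∈ ({k₀, -k₀} : Finset ℤ), a k * (z k) ^ 2 := by
      apply tsum_eq_sum
      intro b hb
      simp only [Finset.mem_insert, Finset.mem_singleton, not_or] at hb
      have : z b = 0 := by simp [hz, hb.1, hb.2]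
      rw [this]; ring
    rw [hs, Finset.sum_pair (by omega)]
    have hzk : z k₀ = t := by simp [hz]
    have hzmk : z (-k₀) = -t := by
      have h : (-k₀ : ℤ) ≠ k₀ := by omega
      simp [hz, h]
    rw [hzk, hzmk, hsym k₀]
    ring
  have hJ : Jfun a z = (3/2) * t^4 + 2 * a k₀ * t^2 := by
    rw [Jfun, hquartic, hquad]; ring
  have htpos : (0:ℝ) < t ^ 2 := by rw [ht2]; linarith
  have hJneg : Jfun a z < 0 := by
    rw [hJ]
    have h4 : t^4 = (t^2)^2 := by ring
    rw [h4, ht2]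
    nlinarith [sq_nonneg (a k₀)]
  constructor
  · exact ⟨z, hmemD, hJneg⟩
  · intro α hα hmin hzero
    have := hmin z hmemD
    rw [hzero, Jfun_zero] at this
    linarith
end

section
/- Let b(x) := (1+x²)^{−1/2}, g(x) := −b''(x)/b(x), and h(x) := −b''(x)/b(x)³; explicitly h(x) = (1−2x²)/(1+x²). Let a : ℝ → ℝ be twice differentiable and satisfy −a''(t) − 3a'(t)² a''(t) = a(t) for all t ∈ ℝ. Then the function w(x,t) := a(t) b(x) satisfies the quasilinear wave equation g(x) ∂_t² w − ∂_x² w + h(x) ∂_t((∂_t w)³) = 0 pointwise for all (x,t) ∈ ℝ², where ∂_t((∂_t w)³) = 3 (∂_t w)² ∂_t² w. -/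
lemma sqrt_pos_aux (x : ℝ) : 0 < Real.sqrt (1 + x ^ 2) :=
  Real.sqrt_pos.2 (by positivity)

lemma sq_sqrt_aux (x : ℝ) : Real.sqrt (1 + x ^ 2) ^ 2 = 1 + x ^ 2 :=
  Real.sq_sqrt (by positivity)

lemma hasDerivAt_sqrt_aux (x : ℝ) :
    HasDerivAt (fun x => Real.sqrt (1 + x ^ 2)) (x / Real.sqrt (1 + x ^ 2)) x := by
  have h1 : HasDerivAt (fun x : ℝ => 1 + x ^ 2) (2 * x) x := by
    simpa using ((hasDerivAt_pow 2 x).const_add 1)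
  have := (Real.hasDerivAt_sqrt (by positivity : (1 + x ^ 2 : ℝ) ≠ 0)).comp x h1
  refine this.congr_deriv ?_
  field_simp

lemma hasDerivAt_b_aux (b : ℝ → ℝ) (hb : b = fun x => 1 / Real.sqrt (1 + x ^ 2)) (x : ℝ) :
    HasDerivAt b (-x / Real.sqrt (1 + x ^ 2) ^ 3) x := by
  subst hb
  have hs := sqrt_pos_aux x
  have h2 := sq_sqrt_aux x
  have := (hasDerivAt_sqrt_aux x).inv hs.ne'
  simp only [one_div]
  refine this.congr_deriv ?_
  rw [div_eq_div_iff (by positivity) (by positivity)]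
  field_simp

lemma deriv_b_aux (b : ℝ → ℝ) (hb : b = fun x => 1 / Real.sqrt (1 + x ^ 2)) :
    deriv b = fun x => -x / Real.sqrt (1 + x ^ 2) ^ 3 := by
  funext x
  exact (hasDerivAt_b_aux b hb x).deriv

lemma deriv_deriv_b_aux (b : ℝ → ℝ) (hb : b = fun x => 1 / Real.sqrt (1 + x ^ 2)) (x : ℝ) :
    deriv (deriv b) x = (2 * x ^ 2 - 1) / Real.sqrt (1 + x ^ 2) ^ 5 := by
  rw [deriv_b_aux b hb]
  have hs := sqrt_pos_aux x
  have h2 := sq_sqrt_aux x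
  have hnum : HasDerivAt (fun x : ℝ => -x) (-1) x := by
    exact hasDerivAt_neg x
  have hden : HasDerivAt (fun x => Real.sqrt (1 + x ^ 2) ^ 3)
      (3 * Real.sqrt (1 + x ^ 2) ^ 2 * (x / Real.sqrt (1 + x ^ 2))) x := by
    exact (hasDerivAt_sqrt_aux x).pow 3
  have hden' : Real.sqrt (1 + x ^ 2) ^ 3 ≠ 0 := by positivity
  rw [show (fun x => -x / Real.sqrt (1 + x ^ 2) ^ 3) = ((fun x : ℝ => -x) / fun x => Real.sqrt (1 + x ^ 2) ^ 3) from rfl, (hnum.div hden hden').deriv]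
  field_simp
  linear_combination (-1 : ℝ) * h2

/-- An explicit separated-variables breather-type solution: with
`b(x) = (1+x²)^{-1/2}`, `g(x) = -b''(x)/b(x)`, `h(x) = -b''(x)/b(x)³`
(explicitly `h(x) = (1-2x²)/(1+x²)`), and `a` twice differentiable solving
`-a'' - 3 a'² a'' = a`, the function `w(x,t) = a(t) b(x)` satisfies
`g(x) ∂ₜ²w - ∂ₓ²w + h(x) ∂ₜ((∂ₜw)³) = 0` pointwise, where
`∂ₜ((∂ₜw)³) = 3 (∂ₜw)² ∂ₜ²w`, `∂ₜw = a'(t) b(x)`, `∂ₜ²w = a''(t) b(x)` and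
`∂ₓ²w = a(t) b''(x)`. -/
theorem stmt17
    (b : ℝ → ℝ) (hb : b = fun x => 1 / Real.sqrt (1 + x ^ 2))
    (g h : ℝ → ℝ)
    (hg : g = fun x => -(deriv (deriv b) x) / b x)
    (hh : h = fun x => -(deriv (deriv b) x) / (b x) ^ 3)
    (a a' a'' : ℝ → ℝ)
    (ha' : ∀ t : ℝ, HasDerivAt a (a' t) t)
    (ha'' : ∀ t : ℝ, HasDerivAt a' (a'' t) t)
    (hode : ∀ t : ℝ, -(a'' t) - 3 * (a' t) ^ 2 * (a'' t) = a t) :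
    (∀ x : ℝ, h x = (1 - 2 * x ^ 2) / (1 + x ^ 2)) ∧
    (∀ x t : ℝ,
      g x * (a'' t * b x) - a t * deriv (deriv b) x +
        h x * (3 * (a' t * b x) ^ 2 * (a'' t * b x)) = 0) := by
  have hbpos : ∀ x : ℝ, 0 < b x := by
    intro x; rw [hb]; simpa using (sqrt_pos_aux x)
  constructor
  · intro x
    have hs := sqrt_pos_aux x
    have h2 := sq_sqrt_aux x
    rw [hh]
    show -(deriv (deriv b) x) / (b x) ^ 3 = (1 - 2 * x ^ 2) / (1 + x ^ 2)
    rw [deriv_deriv_b_aux b hb x, hb]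
    simp only
    set s := Real.sqrt (1 + x ^ 2) with hsdef
    rw [← h2]
    field_simp
    ring
  · intro x t
    have hb0 := (hbpos x).ne'
    rw [hg, hh]
    simp only
    have hode' := hode t
    field_simp
    linear_combination (deriv (deriv b) x) * hode'
end

section
/- Let a, b, c, ω > 0 and let k be a positive integer with cos(kω√b c) = 0. Define φ : [0,∞) → ℝ by φ(x) := √(b/a) sin(kω√b x) + cos(kω√b x) for 0 ≤ x ≤ c and φ(x) := √(b/a) sin(kω√b c) e^{−kω√a (x−c)} for x ≥ c. Then φ is continuously differentiable on [0,∞) with φ(0) = 1 and φ'(0) = kωb/√a > 0; φ satisfies φ''(x) + k²ω² b φ(x) = 0 for x ∈ (0,c) and φ''(x) − k²ω² a φ(x) = 0 for x ∈ (c,∞); and |φ(x)| ≤ M e^{−ρ x} for all x ≥ 0 with ρ := ω√a/2 and M := (1+√(b/a)) e^{ω√a c}, both independent of k. -/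
/-- The exponentially decaying fundamental solution for the step potential: for
`a, b, c, ω > 0` and a positive integer `k` with `cos(kω√b c) = 0`, the function
`φ(x) = √(b/a) sin(kω√b x) + cos(kω√b x)` for `0 ≤ x ≤ c` and
`φ(x) = √(b/a) sin(kω√b c) e^{-kω√a (x-c)}` for `x ≥ c`
is continuously differentiable on `[0,∞)` with `φ(0) = 1`,
`φ'(0) = kωb/√a > 0`, solves `φ'' + k²ω²b φ = 0` on `(0,c)` and
`φ'' - k²ω²a φ = 0` on `(c,∞)`, and satisfies `|φ(x)| ≤ M e^{-ρx}` for `x ≥ 0` with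
`ρ = ω√a/2` and `M = (1 + √(b/a)) e^{ω√a c}`, both independent of `k`. -/
theorem stmt18 (a b c ω : ℝ) (ha : 0 < a) (hb : 0 < b) (hc : 0 < c) (hω : 0 < ω)
    (k : ℕ) (hk : 0 < k)
    (hcos : Real.cos ((k : ℝ) * ω * Real.sqrt b * c) = 0)
    (φ : ℝ → ℝ)
    (hφ : ∀ x : ℝ, φ x =
      if x ≤ c then
        Real.sqrt (b / a) * Real.sin ((k : ℝ) * ω * Real.sqrt b * x) +
          Real.cos ((k : ℝ) * ω * Real.sqrt b * x)
      else
        Real.sqrt (b / a) * Real.sin ((k : ℝ) * ω * Real.sqrt b * c) *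
          Real.exp (-((k : ℝ) * ω * Real.sqrt a) * (x - c))) :
    φ 0 = 1 ∧
    (∃ φ' : ℝ → ℝ,
      (∀ x ∈ Set.Ici (0 : ℝ), HasDerivWithinAt φ (φ' x) (Set.Ici 0) x) ∧
      ContinuousOn φ' (Set.Ici 0) ∧
      φ' 0 = (k : ℝ) * ω * b / Real.sqrt a ∧ 0 < φ' 0) ∧
    (∀ x ∈ Set.Ioo (0 : ℝ) c, deriv (deriv φ) x + (k : ℝ) ^ 2 * ω ^ 2 * b * φ x = 0) ∧
    (∀ x ∈ Set.Ioi c, deriv (deriv φ) x - (k : ℝ) ^ 2 * ω ^ 2 * a * φ x = 0) ∧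
    (∀ x : ℝ, 0 ≤ x →
      |φ x| ≤ ((1 + Real.sqrt (b / a)) * Real.exp (ω * Real.sqrt a * c)) *
        Real.exp (-(ω * Real.sqrt a / 2) * x)) := by
  have hk' : (0:ℝ) < (k:ℝ) := by exact_mod_cast hk
  have hk1 : (1:ℝ) ≤ (k:ℝ) := by exact_mod_cast hk
  have hra : (0:ℝ) < Real.sqrt a := Real.sqrt_pos.mpr ha
  have hrb : (0:ℝ) < Real.sqrt b := Real.sqrt_pos.mpr hb
  set β : ℝ := (k:ℝ) * ω * Real.sqrt b with hβ
  set α : ℝ := (k:ℝ) * ω * Real.sqrt a with hα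
  set A : ℝ := ω * Real.sqrt a with hA
  set r : ℝ := Real.sqrt (b / a) with hrdef
  set s : ℝ := Real.sin (β * c) with hs
  have hrdiv : r = Real.sqrt b / Real.sqrt a := Real.sqrt_div hb.le a
  have hr : 0 < r := by rw [hrdiv]; positivity
  have hsq : Real.sqrt a * r = Real.sqrt b := by
    rw [hrdiv]; field_simp
  have hαr : α * r = β := by
    rw [hα, hβ]
    calc (k:ℝ) * ω * Real.sqrt a * r = (k:ℝ) * ω * (Real.sqrt a * r) := by ring
    _ = (k:ℝ) * ω * Real.sqrt b := by rw [hsq]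
  have hβ2 : β ^ 2 = (k:ℝ) ^ 2 * ω ^ 2 * b := by
    rw [hβ]
    have : Real.sqrt b ^ 2 = b := Real.sq_sqrt hb.le
    linear_combination ((k:ℝ) ^ 2 * ω ^ 2) * this
  have hα2 : α ^ 2 = (k:ℝ) ^ 2 * ω ^ 2 * a := by
    rw [hα]
    have : Real.sqrt a ^ 2 = a := Real.sq_sqrt ha.le
    linear_combination ((k:ℝ) ^ 2 * ω ^ 2) * this
  set f : ℝ → ℝ := fun x => r * Real.sin (β * x) + Real.cos (β * x) with hf_def
  set f' : ℝ → ℝ := fun x => r * (Real.cos (β * x) * β) + -Real.sin (β * x) * β with hf'_def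
  set g : ℝ → ℝ := fun x => r * s * Real.exp (-α * (x - c)) with hg_def
  set g' : ℝ → ℝ := fun x => r * s * (Real.exp (-α * (x - c)) * -α) with hg'_def
  have hlin : ∀ x : ℝ, HasDerivAt (fun y : ℝ => β * y) β x := fun x => by
    simpa using (hasDerivAt_id x).const_mul β
  have hlin2 : ∀ x : ℝ, HasDerivAt (fun y : ℝ => -α * (y - c)) (-α) x := fun x => by
    simpa using ((hasDerivAt_id x).sub_const c).const_mul (-α)
  have hf : ∀ x, HasDerivAt f (f' x) x := fun x =>
    ((hlin x).sin.const_mul r).add (hlin x).cos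
  have hg : ∀ x, HasDerivAt g (g' x) x := fun x =>
    (hlin2 x).exp.const_mul (r * s)
  have hfc : f c = r * s := by simp [hf_def, hcos, ← hs]
  have hd : f' c = g' c := by
    simp only [hf'_def, hg'_def, hcos, ← hs, sub_self, mul_zero, neg_mul, zero_mul, neg_zero,
      Real.exp_zero, one_mul, zero_add]
    have hαr' : (k:ℝ) * ω * Real.sqrt a * r = (k:ℝ) * ω * Real.sqrt b := by
      rw [← hα, ← hβ]; exact hαr
    linear_combination s * hαr'
  have hφf : ∀ x, x ≤ c → φ x = f x := fun x hx => by
    rw [hφ, if_pos hx]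
  have hφg : ∀ x, c ≤ x → φ x = g x := by
    intro x hx
    rcases eq_or_lt_of_le hx with h | h
    · rw [← h, hφf c le_rfl, hfc, hg_def]
      simp
    · rw [hφ, if_neg (not_le.mpr h)]
  set φ' : ℝ → ℝ := fun x => if x ≤ c then f' x else g' x with hφ'_def
  have hder : ∀ x, HasDerivAt φ (φ' x) x := by
    intro x
    rcases lt_trichotomy x c with h | h | h
    · have heq : φ =ᶠ[nhds x] f := by
        filter_upwards [Iio_mem_nhds h] with y hy
        exact hφf y hy.le
      have := (hf x).congr_of_eventuallyEq heq
      simpa [hφ'_def, h.le] using this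
    · subst h
      have h1 : HasDerivWithinAt φ (f' x) (Set.Iic x) x :=
        ((hf x).hasDerivWithinAt).congr (fun y hy => hφf y hy) (hφf x le_rfl)
      have h2 : HasDerivWithinAt φ (f' x) (Set.Ici x) x := by
        rw [hd]
        exact ((hg x).hasDerivWithinAt).congr (fun y hy => hφg y hy) (hφg x le_rfl)
      have h3 := h1.union h2
      rw [Set.Iic_union_Ici] at h3
      have := h3.hasDerivAt (by simp)
      simpa [hφ'_def] using this
    · have heq : φ =ᶠ[nhds x] g := by
        filter_upwards [Ioi_mem_nhds h] with y hy
        exact hφg y hy.le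
      have := (hg x).congr_of_eventuallyEq heq
      simpa [hφ'_def, not_le.mpr h] using this
  have hderiv : deriv φ = φ' := funext fun x => (hder x).deriv
  have hval : φ' 0 = (k:ℝ) * ω * b / Real.sqrt a := by
    have h0 : φ' 0 = r * β := by simp [hφ'_def, hc.le, hf'_def]
    rw [h0, hrdiv, hβ]
    have hbb : Real.sqrt b * Real.sqrt b = b := Real.mul_self_sqrt hb.le
    field_simp
    linear_combination hbb
  refine ⟨?_, ⟨φ', fun x _ => (hder x).hasDerivWithinAt, ?_, hval, ?_⟩, ?_, ?_, ?_⟩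
  · rw [hφf 0 hc.le]; simp [hf_def]
  · -- continuity of φ'
    have : Continuous φ' := by
      apply Continuous.if_le
      · rw [hf'_def]; fun_prop
      · rw [hg'_def]; fun_prop
      · exact continuous_id
      · exact continuous_const
      · intro x hx; rw [hx]; exact hd
    exact this.continuousOn
  · rw [hval]; positivity
  · -- ODE on (0,c)
    intro x hx
    have heq : φ' =ᶠ[nhds x] f' := by
      filter_upwards [Iio_mem_nhds hx.2] with y hy
      have hy' : y < c := hy
      simp [hφ'_def, hy'.le]
    have hf'' := (((hlin x).cos.mul_const β).const_mul r).add (((hlin x).sin.mul_const β).neg)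
    have hfeq : f' = fun y => r * (Real.cos (β * y) * β) + -(Real.sin (β * y) * β) := by
      funext y; rw [hf'_def]; ring
    rw [hderiv, heq.deriv_eq, hfeq, (show HasDerivAt (fun y => r * (Real.cos (β * y) * β) + -(Real.sin (β * y) * β)) _ x from hf'').deriv, hφf x hx.2.le]
    simp only [hf_def]
    linear_combination (-(r * Real.sin (β * x) + Real.cos (β * x))) * hβ2
  · -- ODE on (c,∞)
    intro x hx
    have heq : φ' =ᶠ[nhds x] g' := by
      filter_upwards [Ioi_mem_nhds hx] with y hy
      have hy' : c < y := hy
      simp [hφ'_def, not_le.mpr hy']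
    have hg'' : HasDerivAt g' (r * s * (Real.exp (-α * (x - c)) * -α * -α)) x :=
      ((hlin2 x).exp.mul_const (-α)).const_mul (r * s)
    rw [hderiv, heq.deriv_eq, hg''.deriv, hφg x (le_of_lt hx)]
    simp only [hg_def]
    linear_combination (r * s * Real.exp (-α * (x - c))) * hα2
  · -- the decay bound
    intro x hx
    have hA0 : 0 < A := by rw [hA]; positivity
    rcases le_or_gt x c with h | h
    · rw [hφf x h]
      have h1 : |f x| ≤ 1 + r := by
        calc |f x| ≤ |r * Real.sin (β * x)| + |Real.cos (β * x)| := abs_add_le _ _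
        _ ≤ r * 1 + 1 := by
            rw [abs_mul, abs_of_pos hr]
            gcongr
            · exact Real.abs_sin_le_one _
            · exact Real.abs_cos_le_one _
        _ = 1 + r := by ring
      have h2 : (1:ℝ) ≤ Real.exp (A * c) * Real.exp (-(A / 2) * x) := by
        rw [← Real.exp_add]
        apply Real.one_le_exp
        have t1 : 0 ≤ A * (c - x) := mul_nonneg hA0.le (by linarith)
        have t2 : 0 ≤ A * x := mul_nonneg hA0.le hx
        linarith [t1, t2]
      calc |f x| ≤ (1 + r) * 1 := by linarith
      _ ≤ (1 + r) * (Real.exp (A * c) * Real.exp (-(A / 2) * x)) := by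
          gcongr
      _ = (1 + r) * Real.exp (A * c) * Real.exp (-(A / 2) * x) := by ring
    · rw [hφg x h.le]
      have hαA : A ≤ α := by
        rw [hα, hA]
        have t1 : 0 ≤ ((k:ℝ) - 1) * (ω * Real.sqrt a) :=
          mul_nonneg (by linarith) (by positivity)
        linarith [t1]
      have hexp : Real.exp (-α * (x - c)) ≤ Real.exp (A * c) * Real.exp (-(A / 2) * x) := by
        rw [← Real.exp_add]
        apply Real.exp_le_exp.mpr
        linarith [mul_nonneg (sub_nonneg.mpr hαA) (sub_nonneg.mpr h.le), mul_nonneg hA0.le hx]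
      calc |g x| = r * |s| * Real.exp (-α * (x - c)) := by
            rw [hg_def]
            simp only []
            rw [abs_mul, abs_mul, abs_of_pos hr, abs_of_pos (Real.exp_pos _)]
      _ ≤ r * 1 * Real.exp (-α * (x - c)) := by
            gcongr
            exact Real.abs_sin_le_one _
      _ = r * Real.exp (-α * (x - c)) := by ring
      _ ≤ (1 + r) * (Real.exp (A * c) * Real.exp (-(A / 2) * x)) := by
            apply mul_le_mul (by linarith) hexp (Real.exp_pos _).le (by linarith)
      _ = (1 + r) * Real.exp (A * c) * Real.exp (-(A / 2) * x) := by ring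
end

section
/- Let k be a positive integer, ω, a, b > 0 and Θ ∈ (0,1); set m := 2√a Θ ω and l := √(b/a)·(1−Θ)/Θ. For s ∈ ℝ and c > 0 let T_k(s,c) be the 2×2 real matrix with first row (cos(kω√c s), sin(kω√c s)/(kω√c)) and second row (−kω√c sin(kω√c s), cos(kω√c s)). Then the monodromy matrix A_k := T_k(2π(1−Θ), b) · T_k(2Θπ, a) satisfies det A_k = 1 and tr A_k = 2 cos(kmlπ) cos(kmπ) − (√(a/b) + √(b/a)) sin(kmlπ) sin(kmπ). In particular, if cos(kmπ) = cos(kmlπ) = 0 and a ≠ b, then |tr A_k| = √(a/b) + √(b/a) > 2. -/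
open Matrix

set_option maxHeartbeats 1600000 in
/-- The monodromy matrix of the periodic step potential: with
`m = 2√a Θ ω`, `l = √(b/a)(1-Θ)/Θ` and the propagation matrices
`T_k(s,c) = [[cos(kω√c s), sin(kω√c s)/(kω√c)], [-kω√c sin(kω√c s), cos(kω√c s)]]`,
the monodromy matrix `A_k = T_k(2π(1-Θ), b) · T_k(2Θπ, a)` satisfies `det A_k = 1` and
`tr A_k = 2cos(kmlπ)cos(kmπ) - (√(a/b)+√(b/a)) sin(kmlπ) sin(kmπ)`. In particular, if
`cos(kmπ) = cos(kmlπ) = 0` and `a ≠ b`, then `|tr A_k| = √(a/b)+√(b/a) > 2`. -/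
theorem stmt19 (k : ℕ) (hk : 0 < k) (ω a b Θ : ℝ)
    (hω : 0 < ω) (ha : 0 < a) (hb : 0 < b) (hΘ : Θ ∈ Set.Ioo (0 : ℝ) 1)
    (m l : ℝ) (hm : m = 2 * Real.sqrt a * Θ * ω)
    (hl : l = Real.sqrt (b / a) * (1 - Θ) / Θ)
    (Tk : ℝ → ℝ → Matrix (Fin 2) (Fin 2) ℝ)
    (hTk : ∀ s c : ℝ, Tk s c =
      !![Real.cos ((k : ℝ) * ω * Real.sqrt c * s),
          Real.sin ((k : ℝ) * ω * Real.sqrt c * s) / ((k : ℝ) * ω * Real.sqrt c);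
         -((k : ℝ) * ω * Real.sqrt c) * Real.sin ((k : ℝ) * ω * Real.sqrt c * s),
          Real.cos ((k : ℝ) * ω * Real.sqrt c * s)])
    (A : Matrix (Fin 2) (Fin 2) ℝ)
    (hA : A = Tk (2 * Real.pi * (1 - Θ)) b * Tk (2 * Θ * Real.pi) a) :
    A.det = 1 ∧
    A.trace = 2 * Real.cos ((k : ℝ) * m * l * Real.pi) * Real.cos ((k : ℝ) * m * Real.pi) -
      (Real.sqrt (a / b) + Real.sqrt (b / a)) *
        Real.sin ((k : ℝ) * m * l * Real.pi) * Real.sin ((k : ℝ) * m * Real.pi) ∧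
    ((Real.cos ((k : ℝ) * m * Real.pi) = 0 ∧ Real.cos ((k : ℝ) * m * l * Real.pi) = 0 ∧
        a ≠ b) →
      |A.trace| = Real.sqrt (a / b) + Real.sqrt (b / a) ∧ 2 < |A.trace|) := by
  obtain ⟨hΘ0, hΘ1⟩ := hΘ
  have hk' : (0:ℝ) < (k:ℝ) := by exact_mod_cast hk
  have hsa : (0:ℝ) < Real.sqrt a := Real.sqrt_pos.mpr ha
  have hsb : (0:ℝ) < Real.sqrt b := Real.sqrt_pos.mpr hb
  set α := (k:ℝ) * ω * Real.sqrt a with hαdef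
  set β := (k:ℝ) * ω * Real.sqrt b with hβdef
  have hα : 0 < α := by positivity
  have hβ : 0 < β := by positivity
  have hsab : Real.sqrt a * Real.sqrt (b / a) = Real.sqrt b := by
    rw [← Real.sqrt_mul ha.le]
    congr 1
    field_simp
  have hθa : α * (2 * Θ * Real.pi) = (k:ℝ) * m * Real.pi := by
    rw [hm, hαdef]; ring
  have hθb : β * (2 * Real.pi * (1 - Θ)) = (k:ℝ) * m * l * Real.pi := by
    rw [hm, hl, hβdef]
    field_simp
    nlinarith [hsab]
  have hab : Real.sqrt (a / b) = α / β := by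
    rw [Real.sqrt_div ha.le, hαdef, hβdef]
    field_simp
  have hba : Real.sqrt (b / a) = β / α := by
    rw [Real.sqrt_div hb.le, hαdef, hβdef]
    field_simp
  have hdetT : ∀ s c : ℝ, ((k:ℝ) * ω * Real.sqrt c) ≠ 0 → (Tk s c).det = 1 := by
    intro s c hc
    rw [hTk, Matrix.det_fin_two_of]
    have h1 : Real.sin ((k:ℝ) * ω * Real.sqrt c * s) / ((k:ℝ) * ω * Real.sqrt c) *
        (-((k:ℝ) * ω * Real.sqrt c) * Real.sin ((k:ℝ) * ω * Real.sqrt c * s)) =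
        -(Real.sin ((k:ℝ) * ω * Real.sqrt c * s) ^ 2) := by
      rw [div_mul_eq_mul_div, div_eq_iff hc]
      ring
    rw [h1]
    nlinarith [Real.sin_sq_add_cos_sq ((k:ℝ) * ω * Real.sqrt c * s)]
  have hdet : A.det = 1 := by
    rw [hA, Matrix.det_mul, hdetT _ _ hβ.ne', hdetT _ _ hα.ne', mul_one]
  set ca := Real.cos ((k:ℝ) * m * Real.pi)
  set sa := Real.sin ((k:ℝ) * m * Real.pi)
  set cb := Real.cos ((k:ℝ) * m * l * Real.pi)
  set sb := Real.sin ((k:ℝ) * m * l * Real.pi)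
  have hA' : A = !![cb * ca + sb / β * (-α * sa), cb * (sa / α) + sb / β * ca;
                    -β * sb * ca + cb * (-α * sa), -β * sb * (sa / α) + cb * ca] := by
    rw [hA, hTk, hTk, hθa, hθb]
    rw [show ((k:ℝ) * ω * Real.sqrt b) = β from rfl,
        show ((k:ℝ) * ω * Real.sqrt a) = α from rfl]
    rw [Matrix.mul_fin_two]
  have htr : A.trace = 2 * cb * ca - (Real.sqrt (a / b) + Real.sqrt (b / a)) * sb * sa := by
    rw [hA', Matrix.trace_fin_two_of, hab, hba]
    ring
  refine ⟨hdet, htr, ?_⟩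
  rintro ⟨hca, hcb, hne⟩
  have hsc2 : sa ^ 2 + ca ^ 2 = 1 := Real.sin_sq_add_cos_sq _
  have hsc2' : sb ^ 2 + cb ^ 2 = 1 := Real.sin_sq_add_cos_sq _
  have hsa1 : sa ^ 2 = 1 := by rw [hca] at hsc2; simpa using hsc2
  have hsb1 : sb ^ 2 = 1 := by rw [hcb] at hsc2'; simpa using hsc2'
  set S := Real.sqrt (a / b) + Real.sqrt (b / a) with hS
  have hSpos : 0 < S := by rw [hS, hab, hba]; positivity
  have habs : |A.trace| = S := by
    rw [htr, hca, hcb]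
    rw [show 2 * 0 * 0 - S * sb * sa = -(S * (sb * sa)) by ring, abs_neg, abs_mul,
        abs_of_pos hSpos]
    have h1 : |sa| = 1 := by
      rw [← Real.sqrt_one, ← hsa1, Real.sqrt_sq_eq_abs]
    have h2 : |sb| = 1 := by
      rw [← Real.sqrt_one, ← hsb1, Real.sqrt_sq_eq_abs]
    rw [abs_mul, h1, h2, mul_one, mul_one]
  refine ⟨habs, ?_⟩
  rw [habs, hS, hab, hba]
  have hne' : α ≠ β := by
    intro h
    apply hne
    have hss : Real.sqrt a = Real.sqrt b := by
      have h' : (k:ℝ) * ω * Real.sqrt a = (k:ℝ) * ω * Real.sqrt b := h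
      exact mul_left_cancel₀ (by positivity : ((k:ℝ) * ω) ≠ 0) h'
    rw [← Real.sq_sqrt ha.le, ← Real.sq_sqrt hb.le, hss]
  have h3 : α - β ≠ 0 := sub_ne_zero.mpr hne'
  have h2 : 0 < (α - β) ^ 2 := by positivity
  rw [div_add_div _ _ hβ.ne' hα.ne', lt_div_iff₀ (by positivity)]
  nlinarith
end
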